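/- For all real α > 0 and t > 0, the function z ↦ G_α(t,z) is μ-integrable on G and ∫_G G_α(t,z) dμ(z) = 1. -/

import Mathlib

open MeasureTheory Filter Topology
open scoped ENNReal NNReal

/-- for `α > 0` and `t > 0`, the heat kernel `z ↦ G_α(t,z)` is
`μ`-integrable on `G` and `∫_G G_α(t,z) dμ(z) = 1`. -/
theorem stmt6
    (q : ℕ) (hq : 2 ≤ q)
    (m : ℕ → ℕ) (hm0 : m 0 = 0) (hm1 : m 1 = 1)
    (hmgrow : ∀ n : ℕ, 1 ≤ n → 2 * m n ≤ m (n + 1))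
    (G : Type*) [CommGroup G] [TopologicalSpace G] [IsTopologicalGroup G]
    [CompactSpace G] [MeasurableSpace G] [BorelSpace G]
    (μ : Measure G) [μ.IsHaarMeasure] [IsProbabilityMeasure μ]
    (V : ℕ → Subgroup G) (hVopen : ∀ n, IsOpen (V n : Set G))
    (hV0 : V 0 = ⊤) (hVdesc : ∀ n, V (n + 1) ≤ V n)
    (hVmeas : ∀ n, μ (V n : Set G) = ((q : ENNReal) ^ (n * m n))⁻¹)
    (α t : ℝ) (hα : 0 < α) (ht : 0 < t)
    (φ : ℕ → ℝ) (hφ0 : φ 0 = 0)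
    (hφ : ∀ n : ℕ, 1 ≤ n → φ n = (q : ℝ) ^ (α * ((n * m n : ℕ) : ℝ)))
    (K : G → ℝ)
    (hK : ∀ l : ℕ, ∀ z ∈ (V l : Set G) \ (V (l + 1) : Set G),
      K z = ∑ n ∈ Finset.range (l + 1),
        (Real.exp (-(t * φ n)) - Real.exp (-(t * φ (n + 1)))) * (q : ℝ) ^ (n * m n))
    (hK0 : ∀ z ∈ ⋂ n : ℕ, (V n : Set G), K z = 0) :
    Integrable K μ ∧ ∫ z : G, K z ∂μ = 1 := by
  have hq1 : (1 : ℝ) < q := by exact_mod_cast lt_of_lt_of_le one_lt_two (by exact_mod_cast hq)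
  have hq0 : (0 : ℝ) < q := by linarith
  -- abbreviations
  set e : ℕ → ℝ := fun n => Real.exp (-(t * φ n)) with he
  set d : ℕ → ℝ := fun n => e n - e (n + 1) with hd
  set c : ℕ → ℝ := fun n => d n * (q : ℝ) ^ (n * m n) with hc
  -- m n ≥ 1 for n ≥ 1
  have hm1' : ∀ n, 1 ≤ n → 1 ≤ m n := by
    intro n hn
    induction n with
    | zero => omega
    | succ k ih =>
      rcases Nat.eq_zero_or_pos k with h | h
      · subst h; simp [hm1]
      · have h1 := hmgrow k h
        have h2 := ih h
        omega
  have hnm : ∀ n : ℕ, n ≤ n * m n := by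
    intro n
    rcases Nat.eq_zero_or_pos n with h | h
    · simp [h]
    · have := hm1' n h
      calc n = n * 1 := (mul_one n).symm
        _ ≤ n * m n := Nat.mul_le_mul_left n this
  -- φ is nonnegative and monotone on successive terms
  have hφnn : ∀ n, 0 ≤ φ n := by
    intro n
    rcases Nat.eq_zero_or_pos n with h | h
    · simp [h, hφ0]
    · rw [hφ n h]; positivity
  have hφmono : ∀ n, φ n ≤ φ (n + 1) := by
    intro n
    rcases Nat.eq_zero_or_pos n with h | h
    · subst h; rw [hφ0]; exact hφnn 1
    · rw [hφ n h, hφ (n + 1) (by omega)]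
      apply Real.rpow_le_rpow_of_exponent_le (le_of_lt hq1)
      have h1 : n * m n ≤ (n + 1) * m (n + 1) := by
        have h2 := hmgrow n h
        have h3 := hm1' n h
        nlinarith
      have : ((n * m n : ℕ) : ℝ) ≤ (((n + 1) * m (n + 1) : ℕ) : ℝ) := by exact_mod_cast h1
      nlinarith
  -- d is nonnegative
  have hd_nn : ∀ n, 0 ≤ d n := by
    intro n
    have : -(t * φ (n + 1)) ≤ -(t * φ n) := by nlinarith [hφmono n]
    simpa [hd, he] using Real.exp_le_exp.mpr this
  have hc_nn : ∀ n, 0 ≤ c n := fun n => mul_nonneg (hd_nn n) (by positivity)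
  -- e 0 = 1
  have he0 : e 0 = 1 := by simp [he, hφ0]
  -- e tends to 0
  have he_lim : Tendsto e atTop (𝓝 0) := by
    have hb : (1 : ℝ) < (q : ℝ) ^ α := by
      have := Real.rpow_lt_rpow_of_exponent_lt hq1 hα
      simpa using this
    have hφbig : Tendsto φ atTop atTop := by
      apply tendsto_atTop_mono' atTop
        (show ∀ᶠ n in atTop, ((q : ℝ) ^ α) ^ n ≤ φ n from ?_)
        (tendsto_pow_atTop_atTop_of_one_lt hb)
      filter_upwards [eventually_ge_atTop 1] with n hn
      rw [hφ n hn]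
      have h1 : ((q : ℝ) ^ α) ^ n = (q : ℝ) ^ (α * (n : ℝ)) := by
        rw [Real.rpow_mul (le_of_lt hq0), Real.rpow_natCast]
      rw [h1]
      apply Real.rpow_le_rpow_of_exponent_le (le_of_lt hq1)
      have : ((n : ℕ) : ℝ) ≤ ((n * m n : ℕ) : ℝ) := by exact_mod_cast hnm n
      nlinarith
    have h2 : Tendsto (fun n => t * φ n) atTop atTop := Tendsto.const_mul_atTop ht hφbig
    have h3 : Tendsto (fun n => -(t * φ n)) atTop atBot := tendsto_neg_atBot_iff.mpr h2
    exact Real.tendsto_exp_atBot.comp h3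
  -- summability and sum of d
  have hsum_range : ∀ n, ∑ i ∈ Finset.range n, d i = 1 - e n := by
    intro n
    rw [hd]
    rw [Finset.sum_range_sub' e n, he0]
  have hd_summable : Summable d :=
    summable_of_sum_range_le hd_nn (fun n => by
      rw [hsum_range n]
      have : 0 ≤ e n := le_of_lt (Real.exp_pos _)
      linarith)
  have hd_tsum : ∑' n, d n = 1 := by
    have h1 : Tendsto (fun n => ∑ i ∈ Finset.range n, d i) atTop (𝓝 (∑' n, d n)) :=
      hd_summable.hasSum.tendsto_sum_nat
    have h2 : Tendsto (fun n => ∑ i ∈ Finset.range n, d i) atTop (𝓝 1) := by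
      simp only [hsum_range]
      simpa using tendsto_const_nhds.sub he_lim
    exact tendsto_nhds_unique h1 h2
  -- the intersection is null
  have hVanti : Antitone fun n => (V n : Set G) := by
    have : Antitone V := antitone_nat_of_succ_le hVdesc
    intro a b hab
    exact SetLike.coe_subset_coe.mpr (this hab)
  have hS : μ (⋂ n : ℕ, (V n : Set G)) = 0 := by
    have hq1e : (1 : ℝ≥0∞) < (q : ℝ≥0∞) := by
      exact_mod_cast lt_of_lt_of_le one_lt_two (by exact_mod_cast hq)
    have hle : ∀ n : ℕ, μ (⋂ n : ℕ, (V n : Set G)) ≤ ((q : ℝ≥0∞)⁻¹) ^ n := by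
      intro n
      calc μ (⋂ n : ℕ, (V n : Set G)) ≤ μ (V n : Set G) :=
            measure_mono (Set.iInter_subset _ n)
        _ = ((q : ℝ≥0∞) ^ (n * m n))⁻¹ := hVmeas n
        _ ≤ ((q : ℝ≥0∞) ^ n)⁻¹ :=
            ENNReal.inv_le_inv.mpr (pow_le_pow_right' (le_of_lt hq1e) (hnm n))
        _ = ((q : ℝ≥0∞)⁻¹) ^ n := by rw [ENNReal.inv_pow]
    have hlim : Tendsto (fun n : ℕ => ((q : ℝ≥0∞)⁻¹) ^ n) atTop (𝓝 0) :=
      ENNReal.tendsto_pow_atTop_nhds_zero_of_lt_one (ENNReal.inv_lt_one.mpr hq1e)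
    have := ge_of_tendsto' hlim (fun n => hle n)
    simpa using this
  have hae : ∀ᵐ z ∂μ, z ∉ ⋂ n : ℕ, (V n : Set G) := by
    rw [ae_iff]
    have hset : {z : G | ¬ z ∉ ⋂ n : ℕ, (V n : Set G)} = ⋂ n : ℕ, (V n : Set G) := by
      ext z; simp
    rw [hset]; exact hS
  -- structure of good points
  have hgood : ∀ z : G, z ∉ (⋂ n : ℕ, (V n : Set G)) →
      ∃ l : ℕ, ∀ n, z ∈ (V n : Set G) ↔ n ≤ l := by
    intro z hz
    have hz0 : z ∈ (V 0 : Set G) := by simp [hV0]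
    have hex : ∃ n, z ∉ (V n : Set G) := by
      by_contra h
      push_neg at h
      exact hz (Set.mem_iInter.mpr h)
    classical
    have hN := Nat.find_spec hex
    have hNpos : 1 ≤ Nat.find hex := by
      rcases Nat.eq_zero_or_pos (Nat.find hex) with h | h
      · exact absurd (h ▸ hN) (by simpa using hz0)
      · exact h
    refine ⟨Nat.find hex - 1, fun n => ⟨fun hn => ?_, fun hn => ?_⟩⟩
    · by_contra h
      push_neg at h
      have : Nat.find hex ≤ n := by omega
      exact hN (hVanti this hn)
    · have : n < Nat.find hex := by omega
      by_contra h
      exact absurd (Nat.find_min hex this) (by simpa using h)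
  -- pointwise value of K at good points
  have hKval : ∀ z : G, ∀ l : ℕ, (∀ n, z ∈ (V n : Set G) ↔ n ≤ l) →
      K z = ∑ n ∈ Finset.range (l + 1), c n := by
    intro z l hl
    have hz1 : z ∈ (V l : Set G) := (hl l).mpr le_rfl
    have hz2 : z ∉ (V (l + 1) : Set G) := fun h => by
      have := (hl (l + 1)).mp h; omega
    exact hK l z ⟨hz1, hz2⟩
  -- the ENNReal companion function
  set g : G → ℝ≥0∞ := fun z =>
    ∑' n, Set.indicator (V n : Set G) (fun _ => ENNReal.ofReal (c n)) z with hg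
  have hg_meas : Measurable g :=
    Measurable.ennreal_tsum fun n =>
      measurable_const.indicator (hVopen n).measurableSet
  -- g at good points
  have hgval : ∀ z : G, z ∉ (⋂ n : ℕ, (V n : Set G)) →
      g z = ENNReal.ofReal (K z) ∧ 0 ≤ K z := by
    intro z hz
    obtain ⟨l, hl⟩ := hgood z hz
    have hKz := hKval z l hl
    have hnn : 0 ≤ K z := by
      rw [hKz]; exact Finset.sum_nonneg fun n _ => hc_nn n
    refine ⟨?_, hnn⟩
    have h1 : g z = ∑ n ∈ Finset.range (l + 1),
        Set.indicator (V n : Set G) (fun _ => ENNReal.ofReal (c n)) z := by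
      apply tsum_eq_sum
      intro n hn
      simp only [Finset.mem_range] at hn
      have : z ∉ (V n : Set G) := fun h => by
        have := (hl n).mp h; omega
      simp [Set.indicator_of_notMem this]
    rw [h1, hKz, ENNReal.ofReal_sum_of_nonneg fun n _ => hc_nn n]
    apply Finset.sum_congr rfl
    intro n hn
    simp only [Finset.mem_range] at hn
    have : z ∈ (V n : Set G) := (hl n).mpr (by omega)
    simp [Set.indicator_of_mem this]
  -- lintegral of g
  have hlintg : ∫⁻ z, g z ∂μ = 1 := by
    rw [hg]
    rw [lintegral_tsum fun n =>
      (measurable_const.indicator (hVopen n).measurableSet).aemeasurable]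
    have hterm : ∀ n : ℕ,
        ∫⁻ z, Set.indicator (V n : Set G) (fun _ => ENNReal.ofReal (c n)) z ∂μ
          = ENNReal.ofReal (d n) := by
      intro n
      rw [lintegral_indicator (hVopen n).measurableSet, lintegral_const,
        Measure.restrict_apply MeasurableSet.univ, Set.univ_inter, hVmeas n]
      have hcast : ENNReal.ofReal (c n)
          = ENNReal.ofReal (d n) * (q : ℝ≥0∞) ^ (n * m n) := by
        rw [hc]
        rw [ENNReal.ofReal_mul (hd_nn n)]
        congr 1
        have : ((q : ℝ) ^ (n * m n)) = (((q ^ (n * m n) : ℕ)) : ℝ) := by push_cast; ring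
        rw [this, ENNReal.ofReal_natCast]
        push_cast
        ring
      rw [hcast, mul_assoc, ENNReal.mul_inv_cancel, mul_one]
      · exact pow_ne_zero _ (Nat.cast_ne_zero.mpr (by omega))
      · exact ENNReal.pow_ne_top (ENNReal.natCast_ne_top q)
    simp only [hterm]
    rw [← ENNReal.ofReal_tsum_of_nonneg hd_nn hd_summable, hd_tsum]
    simp
  -- transfer to K
  have hKae : (fun z => ENNReal.ofReal (K z)) =ᵐ[μ] g := by
    filter_upwards [hae] with z hz
    exact ((hgval z hz).1).symm
  have hKnn : 0 ≤ᵐ[μ] K := by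
    filter_upwards [hae] with z hz
    exact (hgval z hz).2
  have hlintK : ∫⁻ z, ENNReal.ofReal (K z) ∂μ = 1 := by
    rw [lintegral_congr_ae hKae]; exact hlintg
  have hKm : AEStronglyMeasurable K μ := by
    apply (hg_meas.ennreal_toReal).aestronglyMeasurable.congr
    filter_upwards [hae] with z hz
    rw [(hgval z hz).1, ENNReal.toReal_ofReal (hgval z hz).2]
  have hint : Integrable K μ := by
    refine ⟨hKm, ?_⟩
    rw [hasFiniteIntegral_iff_norm]
    have : ∫⁻ z, ENNReal.ofReal ‖K z‖ ∂μ = ∫⁻ z, ENNReal.ofReal (K z) ∂μ := by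
      apply lintegral_congr_ae
      filter_upwards [hKnn] with z hz
      rw [Real.norm_of_nonneg hz]
    rw [this, hlintK]
    exact ENNReal.one_lt_top
  refine ⟨hint, ?_⟩
  rw [integral_eq_lintegral_of_nonneg_ae hKnn hKm, hlintK]
  simp
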